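/- Conservation of the energy functional: let γ1 > 0, δ1 > 0, γ2, δ2 be real constants and γ = 7/48, and let η : ℝ × [0,T] → ℝ be a smooth solution of the fifth-order KdV–BBM equation such that x ↦ η(x,t) is a Schwartz function for each t and t ↦ η(·,t) is smooth into the Schwartz space. Then the functional E(η(·,t)) := (1/2) ∫_ℝ ( η(x,t)² + γ1 η_x(x,t)² + δ1 η_{xx}(x,t)² ) dx is independent of t ∈ [0,T]; in particular E(η(·,t)) = E(η(·,0)) for all t. -/

import Mathlib

/-!
STATEMENT 11 (conservation of the energy functional, (apriori4) of the paper):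
if `γ = 7/48` and `η` is a smooth solution on `ℝ × [0,T]` of the fifth-order
KdV–BBM equation, Schwartz in `x` for each `t` and smooth in `t` into the
Schwartz space, then
`E(η(·,t)) := (1/2)∫(η² + γ1 η_x² + δ1 η_{xx}²)dx` is independent of `t ∈ [0,T]`;
in particular `E(η(·,t)) = E(η(·,0))`.

The solution is formalized as a curve `η : ℝ → 𝓢(ℝ,ℝ)` of Schwartz functions;
smoothness in time into the Schwartz space is encoded by a sequence `D n` of
time-derivative curves, `D 0 = η`, `D (n+1) t` being the derivative (within
`[0,T]`) of `D n` at `t` in the topology of `𝓢(ℝ,ℝ)`.  So `D 1 t = η_t(·,t)`.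
-/

noncomputable section
open MeasureTheory Real Set Filter Topology

namespace ECaux

abbrev S := SchwartzMap ℝ ℝ

lemma temperate (g : S) : Function.HasTemperateGrowth (⇑g) := by
  refine ⟨g.smooth ⊤, fun n => ⟨0, SchwartzMap.seminorm ℝ 0 n g, fun x => ?_⟩⟩
  simpa using SchwartzMap.norm_iteratedFDeriv_le_seminorm ℝ g n x

def mulS (f g : S) : S :=
  SchwartzMap.bilinLeftCLM (ContinuousLinearMap.mul ℝ ℝ) (temperate g) f

@[simp] lemma mulS_apply (f g : S) (x : ℝ) : mulS f g x = f x * g x := rfl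

abbrev d : S →L[ℝ] S := SchwartzMap.derivCLM ℝ ℝ

lemma coe_d (f : S) : ⇑(d f) = deriv (⇑f) := funext fun x => SchwartzMap.derivCLM_apply ℝ f x

def ip (f g : S) : ℝ := ∫ x, f x * g x

lemma integ (f g : S) : Integrable (fun x => f x * g x) := (mulS f g).integrable

lemma ip_eq {f g f' g' : S} (h : ∀ x, f x * g x = f' x * g' x) : ip f g = ip f' g' := by
  unfold ip; congr 1; funext x; exact h x

lemma ip_comm (f g : S) : ip f g = ip g f := ip_eq fun x => mul_comm _ _

lemma ip_add_right (f g h : S) : ip f (g + h) = ip f g + ip f h := by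
  unfold ip
  simp only [SchwartzMap.add_apply, mul_add]
  exact integral_add (integ f g) (integ f h)

lemma ip_add_left (f g h : S) : ip (f + g) h = ip f h + ip g h := by
  rw [ip_comm, ip_add_right, ip_comm h f, ip_comm h g]

lemma ip_smul_right (c : ℝ) (f g : S) : ip f (c • g) = c * ip f g := by
  unfold ip
  simp only [SchwartzMap.smul_apply, smul_eq_mul, mul_left_comm (_ : ℝ)]
  rw [integral_const_mul]

lemma ip_sub_right (f g h : S) : ip f (g - h) = ip f g - ip f h := by
  have : g - h = g + (-1 : ℝ) • h := by module
  rw [this, ip_add_right, ip_smul_right]; ring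

lemma ip_sub_left (f g h : S) : ip (f - g) h = ip f h - ip g h := by
  rw [ip_comm, ip_sub_right, ip_comm h f, ip_comm h g]

lemma ip_smul_left (c : ℝ) (f g : S) : ip (c • f) g = c * ip f g := by
  rw [ip_comm, ip_smul_right, ip_comm]

lemma sem_cont (k n : ℕ) : Continuous fun f : S => SchwartzMap.seminorm ℝ k n f := by
  have := (schwartz_withSeminorms ℝ ℝ ℝ).continuous_seminorm (k, n)
  simpa [schwartzSeminormFamily] using this

lemma abs_ip_le (f g : S) :
    |ip f g| ≤ (π * (SchwartzMap.seminorm ℝ 0 0 g + SchwartzMap.seminorm ℝ 2 0 g))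
      * SchwartzMap.seminorm ℝ 0 0 f := by
  have hbound : ∀ x : ℝ, ‖f x * g x‖ ≤
      (SchwartzMap.seminorm ℝ 0 0 f * (SchwartzMap.seminorm ℝ 0 0 g
        + SchwartzMap.seminorm ℝ 2 0 g)) * (1 + x ^ 2)⁻¹ := by
    intro x
    have h1 : ‖f x‖ ≤ SchwartzMap.seminorm ℝ 0 0 f := SchwartzMap.norm_le_seminorm ℝ f x
    have h2 : (1 + x ^ 2) * ‖g x‖ ≤ SchwartzMap.seminorm ℝ 0 0 g
        + SchwartzMap.seminorm ℝ 2 0 g := by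
      have h3 : ‖g x‖ ≤ SchwartzMap.seminorm ℝ 0 0 g := SchwartzMap.norm_le_seminorm ℝ g x
      have h4 : ‖x‖ ^ 2 * ‖g x‖ ≤ SchwartzMap.seminorm ℝ 2 0 g :=
        SchwartzMap.norm_pow_mul_le_seminorm ℝ g 2 x
      have : x ^ 2 * ‖g x‖ ≤ SchwartzMap.seminorm ℝ 2 0 g := by
        simpa [sq_abs, Real.norm_eq_abs] using h4
      nlinarith [norm_nonneg (g x)]
    have hpos : (0 : ℝ) < 1 + x ^ 2 := by positivity
    have h5 : ‖g x‖ ≤ (SchwartzMap.seminorm ℝ 0 0 g + SchwartzMap.seminorm ℝ 2 0 g)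
        * (1 + x ^ 2)⁻¹ := by
      rw [le_mul_inv_iff₀ hpos]; linarith
    calc ‖f x * g x‖ = ‖f x‖ * ‖g x‖ := norm_mul _ _
      _ ≤ SchwartzMap.seminorm ℝ 0 0 f * ((SchwartzMap.seminorm ℝ 0 0 g
            + SchwartzMap.seminorm ℝ 2 0 g) * (1 + x ^ 2)⁻¹) := by
          apply mul_le_mul h1 h5 (norm_nonneg _) (apply_nonneg _ _)
      _ = _ := by ring
  have hint : Integrable (fun x : ℝ => (SchwartzMap.seminorm ℝ 0 0 f
      * (SchwartzMap.seminorm ℝ 0 0 g + SchwartzMap.seminorm ℝ 2 0 g)) * (1 + x ^ 2)⁻¹) :=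
    (integrable_inv_one_add_sq).const_mul _
  have := norm_integral_le_of_norm_le hint (Eventually.of_forall hbound)
  rw [integral_const_mul, integral_univ_inv_one_add_sq] at this
  calc |ip f g| ≤ _ := this
    _ = _ := by ring

lemma tendsto_ip {α : Type*} {l : Filter α} {F G : α → S} {f g : S}
    (hF : Tendsto F l (𝓝 f)) (hG : Tendsto G l (𝓝 g)) :
    Tendsto (fun a => ip (F a) (G a)) l (𝓝 (ip f g)) := by
  have key : ∀ a, ip (F a) (G a) = ip f g + ip (F a - f) (G a) + ip f (G a - g) := by
    intro a
    have e1 : ip (F a - f) (G a) = ip (F a) (G a) - ip f (G a) := ip_sub_left _ _ _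
    have e2 : ip f (G a - g) = ip f (G a) - ip f g := ip_sub_right _ _ _
    rw [e1, e2]; ring
  rw [show ip f g = ip f g + 0 + 0 by ring]
  simp only [key]
  refine (tendsto_const_nhds.add ?_).add ?_
  · -- ip (F a - f) (G a) → 0
    have hsub : Tendsto (fun a => F a - f) l (𝓝 0) := by
      simpa using hF.sub (tendsto_const_nhds (x := f))
    apply squeeze_zero_norm (fun a => abs_ip_le (F a - f) (G a))
    have h1 : Tendsto (fun a => π * (SchwartzMap.seminorm ℝ 0 0 (G a)
        + SchwartzMap.seminorm ℝ 2 0 (G a))) l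
        (𝓝 (π * (SchwartzMap.seminorm ℝ 0 0 g + SchwartzMap.seminorm ℝ 2 0 g))) := by
      exact (tendsto_const_nhds.mul ((((sem_cont 0 0).tendsto g).comp hG).add
        (((sem_cont 2 0).tendsto g).comp hG)))
    have h2 : Tendsto (fun a => SchwartzMap.seminorm ℝ 0 0 (F a - f)) l (𝓝 0) := by
      have := ((sem_cont 0 0).tendsto (0 : S)).comp hsub
      simpa [Function.comp_def] using this
    simpa using h1.mul h2
  · -- ip f (G a - g) → 0
    have hsub : Tendsto (fun a => G a - g) l (𝓝 0) := by
      simpa using hG.sub (tendsto_const_nhds (x := g))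
    apply squeeze_zero_norm (fun a => abs_ip_le f (G a - g))
    have h1 : Tendsto (fun a => π * (SchwartzMap.seminorm ℝ 0 0 (G a - g)
        + SchwartzMap.seminorm ℝ 2 0 (G a - g))) l (𝓝 0) := by
      have h2 := ((sem_cont 0 0).tendsto (0 : S)).comp hsub
      have h3 := ((sem_cont 2 0).tendsto (0 : S)).comp hsub
      simp only [Function.comp_def] at h2 h3
      have := tendsto_const_nhds (x := π) (f := l) |>.mul (h2.add h3)
      simpa using this
    simpa using h1.mul tendsto_const_nhds


lemma hasderiv (f : S) (x : ℝ) : HasDerivAt (⇑f) (d f x) x := by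
  rw [coe_d]; exact f.differentiableAt.hasDerivAt

lemma ibp (f g : S) : ip (d f) g = - ip f (d g) := by
  have H := integral_mul_deriv_eq_deriv_mul_of_integrable
    (u := ⇑f) (v := ⇑g) (u' := ⇑(d f)) (v' := ⇑(d g))
    (fun x _ => hasderiv f x) (fun x _ => hasderiv g x) ?_ ?_ ?_
  · unfold ip
    have h1 : ∫ x, f x * (d g) x = - ∫ x, (d f) x * g x := by
      simpa [Pi.mul_apply] using H
    rw [h1]; ring_nf
  · exact (integ f (d g)).congr (Eventually.of_forall fun x => rfl)
  · exact (integ (d f) g).congr (Eventually.of_forall fun x => rfl)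
  · exact (integ f g).congr (Eventually.of_forall fun x => rfl)


lemma ibp' (f g : S) : ip f (d g) = - ip (d f) g := by
  have := ibp f g; linarith

lemma ip_self_d (f : S) : ip f (d f) = 0 := by
  have h1 := ibp f f
  have h2 : ip (d f) f = ip f (d f) := ip_comm _ _
  linarith

lemma mulS_add (f g h : S) : mulS f (g + h) = mulS f g + mulS f h := by
  ext x; simp [mul_add]

lemma d_mulS (f g : S) : d (mulS f g) = mulS (d f) g + mulS f (d g) := by
  ext x
  have : deriv (⇑(mulS f g)) x = deriv (⇑f) x * g x + f x * deriv (⇑g) x := by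
    have hcoe : ⇑(mulS f g) = fun y => f y * g y := funext fun y => rfl
    rw [hcoe]
    exact deriv_fun_mul f.differentiableAt g.differentiableAt
  rw [← coe_d] at this
  simp only [SchwartzMap.add_apply, mulS_apply, this, coe_d]

lemma iter2 (f : S) : iteratedDeriv 2 (⇑f) = ⇑(d (d f)) := by
  rw [iteratedDeriv_succ, iteratedDeriv_one, ← coe_d, ← coe_d]

lemma iter3 (f : S) : iteratedDeriv 3 (⇑f) = ⇑(d (d (d f))) := by
  rw [iteratedDeriv_succ, iter2, ← coe_d]

lemma iter4 (f : S) : iteratedDeriv 4 (⇑f) = ⇑(d (d (d (d f)))) := by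
  rw [iteratedDeriv_succ, iter3, ← coe_d]

lemma iter5 (f : S) : iteratedDeriv 5 (⇑f) = ⇑(d (d (d (d (d f))))) := by
  rw [iteratedDeriv_succ, iter4, ← coe_d]


lemma ip_zero_right (f : S) : ip f 0 = 0 := by unfold ip; simp

def bb (γ1 δ1 : ℝ) (f g : S) : ℝ :=
  ip f g + γ1 * ip (d f) (d g) + δ1 * ip (d (d f)) (d (d g))

lemma bb_comm (γ1 δ1 : ℝ) (f g : S) : bb γ1 δ1 f g = bb γ1 δ1 g f := by
  unfold bb
  rw [ip_comm f g, ip_comm (d f) (d g), ip_comm (d (d f)) (d (d g))]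

lemma tendsto_bb {γ1 δ1 : ℝ} {α : Type*} {l : Filter α} {F G : α → S} {f g : S}
    (hF : Tendsto F l (𝓝 f)) (hG : Tendsto G l (𝓝 g)) :
    Tendsto (fun a => bb γ1 δ1 (F a) (G a)) l (𝓝 (bb γ1 δ1 f g)) := by
  unfold bb
  have hdF : Tendsto (fun a => d (F a)) l (𝓝 (d f)) := (d.continuous.tendsto f).comp hF
  have hdG : Tendsto (fun a => d (G a)) l (𝓝 (d g)) := (d.continuous.tendsto g).comp hG
  have hddF : Tendsto (fun a => d (d (F a))) l (𝓝 (d (d f))) :=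
    (d.continuous.tendsto (d f)).comp hdF
  have hddG : Tendsto (fun a => d (d (G a))) l (𝓝 (d (d g))) :=
    (d.continuous.tendsto (d g)).comp hdG
  exact ((tendsto_ip hF hG).add (tendsto_const_nhds.mul (tendsto_ip hdF hdG))).add
    (tendsto_const_nhds.mul (tendsto_ip hddF hddG))

lemma key (γ1 γ2 δ1 δ2 : ℝ) (u v : S)
    (heq : ∀ x : ℝ,
      u x + deriv (⇑v) x
        - γ1 * iteratedDeriv 2 (⇑u) x
        + γ2 * iteratedDeriv 3 (⇑v) x
        + δ1 * iteratedDeriv 4 (⇑u) x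
        + δ2 * iteratedDeriv 5 (⇑v) x
        + (3 / 4) * deriv (fun y => v y ^ 2) x
        + (7 / 48) * iteratedDeriv 3 (fun y => v y ^ 2) x
        - (7 / 48) * deriv (fun y => (deriv (⇑v) y) ^ 2) x
        - (1 / 8) * deriv (fun y => v y ^ 3) x = 0) :
    bb γ1 δ1 u v = 0 := by
  set w := mulS v v with hw
  set m := mulS (d v) (d v) with hm
  set c := mulS v w with hc
  have hwcoe : (fun y => v y ^ 2) = ⇑w := funext fun y => by
    simp only [hw, mulS_apply]; ring
  have hmcoe : (fun y => (deriv (⇑v) y) ^ 2) = ⇑m := funext fun y => by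
    simp only [hm, mulS_apply, coe_d]; ring
  have hccoe : (fun y => v y ^ 3) = ⇑c := funext fun y => by
    simp only [hc, hw, mulS_apply]; ring
  have hP : u + d v - γ1 • d (d u) + γ2 • d (d (d v)) + δ1 • d (d (d (d u)))
      + δ2 • d (d (d (d (d v)))) + (3 / 4 : ℝ) • d w + (7 / 48 : ℝ) • d (d (d w))
      - (7 / 48 : ℝ) • d m - (1 / 8 : ℝ) • d c = 0 := by
    ext x
    have h := heq x
    simp only [hwcoe, hmcoe, hccoe, iter2, iter3, iter4, iter5] at h
    simp only [← coe_d] at h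
    simp only [SchwartzMap.sub_apply, SchwartzMap.add_apply, SchwartzMap.smul_apply,
      SchwartzMap.zero_apply, smul_eq_mul]
    linarith
  -- vanishing lemmas
  have hA1 : ip v (d v) = 0 := ip_self_d v
  have hA3 : ip v (d (d (d v))) = 0 := by
    rw [ibp' v (d (d v)), ip_self_d (d v)]; ring
  have hA5 : ip v (d (d (d (d (d v))))) = 0 := by
    rw [ibp' v (d (d (d (d v)))), ibp' (d v) (d (d (d v))), ip_self_d (d (d v))]; ring
  have hwd : ip w (d v) = 0 := by
    have h1 := ibp w v
    rw [show d w = mulS (d v) v + mulS v (d v) from by rw [hw, d_mulS],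
      ip_add_left] at h1
    have e1 : ip (mulS (d v) v) v = ip w (d v) := ip_eq fun x => by
      simp only [hw, mulS_apply, coe_d]; ring
    have e2 : ip (mulS v (d v)) v = ip w (d v) := ip_eq fun x => by
      simp only [hw, mulS_apply, coe_d]; ring
    rw [e1, e2] at h1; linarith
  have hA2 : ip v (d w) = 0 := by
    rw [ibp' v w, ip_comm (d v) w, hwd]; ring
  have hA4 : ip v (d (d (d w))) = ip v (d m) := by
    rw [ibp' v (d (d w)), ibp' (d v) (d w)]
    have h1 : ip (d (d v)) (d w) = ip v (d m) := by
      rw [show d w = mulS (d v) v + mulS v (d v) from by rw [hw, d_mulS],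
        show d m = mulS (d (d v)) (d v) + mulS (d v) (d (d v)) from by rw [hm, d_mulS],
        ip_add_right, ip_add_right]
      have e1 : ip (d (d v)) (mulS (d v) v) = ip v (mulS (d (d v)) (d v)) :=
        ip_eq fun x => by simp only [mulS_apply]; ring
      have e2 : ip (d (d v)) (mulS v (d v)) = ip v (mulS (d v) (d (d v))) :=
        ip_eq fun x => by simp only [mulS_apply]; ring
      rw [e1, e2]
    rw [h1]; ring
  have hcd : ip c (d v) = 0 := by
    have h1 := ibp c v
    rw [show d c = mulS (d v) w + (mulS v (mulS (d v) v) + mulS v (mulS v (d v))) from by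
        rw [hc, d_mulS, show d w = mulS (d v) v + mulS v (d v) from by rw [hw, d_mulS],
          mulS_add],
      ip_add_left, ip_add_left] at h1
    have e1 : ip (mulS (d v) w) v = ip c (d v) := ip_eq fun x => by
      simp only [hc, mulS_apply]; ring
    have e2 : ip (mulS v (mulS (d v) v)) v = ip c (d v) := ip_eq fun x => by
      simp only [hc, hw, mulS_apply]; ring
    have e3 : ip (mulS v (mulS v (d v))) v = ip c (d v) := ip_eq fun x => by
      simp only [hc, hw, mulS_apply]; ring
    rw [e1, e2, e3] at h1; linarith
  have hA6 : ip v (d c) = 0 := by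
    rw [ibp' v c, ip_comm (d v) c, hcd]; ring
  -- expand ip v P = 0
  have h0 := congrArg (ip v) hP
  rw [ip_zero_right] at h0
  simp only [ip_add_right, ip_sub_right, ip_smul_right] at h0
  rw [hA1, hA3, hA5, hA2, hA4, hA6] at h0
  -- convert bb
  have hb2 : ip (d u) (d v) = - ip v (d (d u)) := by
    rw [ip_comm (d u) (d v)]; exact ibp v (d u)
  have hb3 : ip (d (d u)) (d (d v)) = ip v (d (d (d (d u)))) := by
    rw [ip_comm, ibp (d v) (d (d u)), ibp' v (d (d (d u)))]
  unfold bb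
  rw [ip_comm u v, hb2, hb3]
  linarith


lemma bb_sub_left (γ1 δ1 : ℝ) (f g h : S) :
    bb γ1 δ1 (f - g) h = bb γ1 δ1 f h - bb γ1 δ1 g h := by
  unfold bb; simp only [map_sub, ip_sub_left]; ring

lemma bb_sub_right (γ1 δ1 : ℝ) (f g h : S) :
    bb γ1 δ1 f (g - h) = bb γ1 δ1 f g - bb γ1 δ1 f h := by
  unfold bb; simp only [map_sub, ip_sub_right]; ring

lemma bb_smul_left (γ1 δ1 c : ℝ) (f g : S) :
    bb γ1 δ1 (c • f) g = c * bb γ1 δ1 f g := by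
  unfold bb; simp only [_root_.map_smul, ip_smul_left]; ring

lemma bb_smul_right (γ1 δ1 c : ℝ) (f g : S) :
    bb γ1 δ1 f (c • g) = c * bb γ1 δ1 f g := by
  unfold bb; simp only [_root_.map_smul, ip_smul_right]; ring

lemma energy_eq (γ1 δ1 : ℝ) (f : S) :
    (∫ x : ℝ, (f x ^ 2 + γ1 * (deriv (⇑f) x) ^ 2 + δ1 * (iteratedDeriv 2 (⇑f) x) ^ 2))
      = bb γ1 δ1 f f := by
  have h1 : ∀ x : ℝ, f x ^ 2 + γ1 * (deriv (⇑f) x) ^ 2 + δ1 * (iteratedDeriv 2 (⇑f) x) ^ 2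
      = f x * f x + (γ1 * ((d f) x * (d f) x) + δ1 * ((d (d f)) x * (d (d f)) x)) := by
    intro x
    simp only [iter2]
    rw [← coe_d f]
    ring
  simp only [h1]
  have i1 : Integrable (fun x : ℝ => f x * f x) := integ f f
  have i2 : Integrable (fun x : ℝ => γ1 * ((d f) x * (d f) x)) :=
    (integ (d f) (d f)).const_mul γ1
  have i3 : Integrable (fun x : ℝ => δ1 * ((d (d f)) x * (d (d f)) x)) :=
    (integ (d (d f)) (d (d f))).const_mul δ1
  have i23 : Integrable (fun x : ℝ => γ1 * ((d f) x * (d f) x)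
      + δ1 * ((d (d f)) x * (d (d f)) x)) := i2.add i3
  rw [integral_add i1 i23, integral_add i2 i3, integral_const_mul, integral_const_mul]
  unfold bb ip
  ring

end ECaux

open ECaux

theorem energy_conservation (γ1 δ1 γ2 δ2 T : ℝ) (hγ1 : 0 < γ1) (hδ1 : 0 < δ1)
    (hT : 0 < T)
    (η : ℝ → SchwartzMap ℝ ℝ) (D : ℕ → ℝ → SchwartzMap ℝ ℝ) (hD0 : D 0 = η)
    (hDdiff : ∀ n : ℕ, ∀ t ∈ Icc (0 : ℝ) T,
      Tendsto (fun h : ℝ => h⁻¹ • (D n (t + h) - D n t))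
        (nhdsWithin 0 {h : ℝ | h ≠ 0 ∧ t + h ∈ Icc (0 : ℝ) T}) (nhds (D (n + 1) t)))
    -- `η` solves the fifth-order KdV–BBM equation with `γ = 7/48` on `ℝ × [0,T]`:
    (heq : ∀ t ∈ Icc (0 : ℝ) T, ∀ x : ℝ,
      D 1 t x + deriv (fun y => η t y) x
        - γ1 * iteratedDeriv 2 (fun y => D 1 t y) x
        + γ2 * iteratedDeriv 3 (fun y => η t y) x
        + δ1 * iteratedDeriv 4 (fun y => D 1 t y) x
        + δ2 * iteratedDeriv 5 (fun y => η t y) x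
        + (3 / 4) * deriv (fun y => η t y ^ 2) x
        + (7 / 48) * iteratedDeriv 3 (fun y => η t y ^ 2) x
        - (7 / 48) * deriv (fun y => (deriv (fun z => η t z) y) ^ 2) x
        - (1 / 8) * deriv (fun y => η t y ^ 3) x = 0) :
    -- conclusion: conservation of the energy
    ∀ t ∈ Icc (0 : ℝ) T,
      (1 / 2) * (∫ x : ℝ,
          (η t x ^ 2 + γ1 * (deriv (fun y => η t y) x) ^ 2
            + δ1 * (iteratedDeriv 2 (fun y => η t y) x) ^ 2)) =
        (1 / 2) * ∫ x : ℝ,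
          (η 0 x ^ 2 + γ1 * (deriv (fun y => η 0 y) x) ^ 2
            + δ1 * (iteratedDeriv 2 (fun y => η 0 y) x) ^ 2) := by
  have hEderiv : ∀ s ∈ Icc (0 : ℝ) T,
      HasDerivWithinAt (fun r => bb γ1 δ1 (η r) (η r)) 0 (Icc (0 : ℝ) T) s := by
    intro s hs
    have hu := hDdiff 0 s hs
    rw [hD0] at hu
    simp only [zero_add] at hu
    have hkey : bb γ1 δ1 (D 1 s) (η s) = 0 :=
      key γ1 γ2 δ1 δ2 (D 1 s) (η s) (heq s hs)
    have hφ : Tendsto (fun y => y - s) (𝓝[Icc (0 : ℝ) T \ {s}] s)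
        (𝓝[{h : ℝ | h ≠ 0 ∧ s + h ∈ Icc (0 : ℝ) T}] 0) := by
      apply tendsto_nhdsWithin_of_tendsto_nhds_of_eventually_within
      · have h1 : Tendsto (fun y : ℝ => y - s) (𝓝 s) (𝓝 0) := by
          simpa using (tendsto_id : Tendsto id (𝓝 s) (𝓝 s)).sub
            (tendsto_const_nhds (x := s))
        exact h1.mono_left nhdsWithin_le_nhds
      · filter_upwards [self_mem_nhdsWithin] with y hy
        refine ⟨sub_ne_zero.2 hy.2, ?_⟩
        simpa [add_sub_cancel] using hy.1
    have hq : Tendsto (fun y => (y - s)⁻¹ • (η y - η s)) (𝓝[Icc (0 : ℝ) T \ {s}] s)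
        (𝓝 (D 1 s)) := by
      have h2 := hu.comp hφ
      refine h2.congr fun y => ?_
      simp [add_sub_cancel]
    have hηy : Tendsto (fun y => η y) (𝓝[Icc (0 : ℝ) T \ {s}] s) (𝓝 (η s)) := by
      have h2 : Tendsto (fun y : ℝ => y - s) (𝓝[Icc (0 : ℝ) T \ {s}] s) (𝓝 0) :=
        hφ.mono_right nhdsWithin_le_nhds
      have h3 := h2.smul hq
      rw [zero_smul] at h3
      have h4 : Tendsto (fun y => η s + (y - s) • ((y - s)⁻¹ • (η y - η s)))
          (𝓝[Icc (0 : ℝ) T \ {s}] s) (𝓝 (η s)) := by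
        simpa using tendsto_const_nhds.add h3
      refine h4.congr' ?_
      filter_upwards [self_mem_nhdsWithin] with y hy
      have hne : y - s ≠ 0 := sub_ne_zero.2 hy.2
      rw [smul_inv_smul₀ hne, add_sub_cancel]
    rw [hasDerivWithinAt_iff_tendsto_slope]
    have hslope : ∀ y : ℝ, slope (fun r => bb γ1 δ1 (η r) (η r)) s y
        = bb γ1 δ1 ((y - s)⁻¹ • (η y - η s)) (η y)
          + bb γ1 δ1 (η s) ((y - s)⁻¹ • (η y - η s)) := by
      intro y
      have hd : bb γ1 δ1 (η y) (η y) - bb γ1 δ1 (η s) (η s)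
          = bb γ1 δ1 (η y - η s) (η y) + bb γ1 δ1 (η s) (η y - η s) := by
        rw [bb_sub_left, bb_sub_right]; ring
      rw [slope_def_module, hd, smul_eq_mul]
      rw [bb_smul_left, bb_smul_right]
      ring
    have hlim : Tendsto (fun y => bb γ1 δ1 ((y - s)⁻¹ • (η y - η s)) (η y)
        + bb γ1 δ1 (η s) ((y - s)⁻¹ • (η y - η s))) (𝓝[Icc (0 : ℝ) T \ {s}] s)
        (𝓝 (bb γ1 δ1 (D 1 s) (η s) + bb γ1 δ1 (η s) (D 1 s))) :=
      (tendsto_bb hq hηy).add (tendsto_bb tendsto_const_nhds hq)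
    have hzero : bb γ1 δ1 (D 1 s) (η s) + bb γ1 δ1 (η s) (D 1 s) = 0 := by
      rw [bb_comm γ1 δ1 (η s) (D 1 s), hkey]; ring
    rw [hzero] at hlim
    exact hlim.congr fun y => (hslope y).symm
  have hcont : ContinuousOn (fun r => bb γ1 δ1 (η r) (η r)) (Icc (0 : ℝ) T) :=
    fun s hs => (hEderiv s hs).continuousWithinAt
  have hderiv : ∀ s ∈ Ico (0 : ℝ) T,
      HasDerivWithinAt (fun r => bb γ1 δ1 (η r) (η r)) 0 (Ici s) s := by
    intro s hs
    have hmem : Icc (0 : ℝ) T ∈ 𝓝[Ici s] s := by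
      rw [mem_nhdsWithin]
      exact ⟨Iio T, isOpen_Iio, hs.2, fun y hy => ⟨le_trans hs.1 hy.2, le_of_lt hy.1⟩⟩
    exact (hEderiv s (Ico_subset_Icc_self hs)).mono_of_mem_nhdsWithin hmem
  have hconst := constant_of_has_deriv_right_zero hcont hderiv
  intro t ht
  have h1 := hconst t ht
  rw [energy_eq γ1 δ1 (η t), energy_eq γ1 δ1 (η 0), h1]
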